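/- For every integer k ≥ 1, the sequence a_n = f_{2^k,n}(−1) satisfies the linear recurrence with characteristic polynomial g_k(x) = (x−1)^{2^k} + 1; that is, ∑_{ν=0}^{2^k} (−1)^ν C(2^k,ν) a_{n+2^k−ν} = −a_n for all n ≥ 0, with initial values a_n = 2^n for 0 ≤ n ≤ 2^k − 1. -/

import Mathlib

open Finset

/-- Shift lemma for the transformed sums. -/
private lemma shift_lemma (ε : ℕ → ℤ) (m n : ℕ) :
    (∑ j ∈ range (n + 1 + 1), (((n + 1).choose j : ℤ)) * ε (j + m)) -
      (∑ j ∈ range (n + 1), ((n.choose j : ℤ)) * ε (j + m)) =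
    ∑ j ∈ range (n + 1), ((n.choose j : ℤ)) * ε (j + (m + 1)) := by
  rw [Finset.sum_range_succ' (fun j => (((n + 1).choose j : ℤ)) * ε (j + m)) (n + 1),
      Finset.sum_range_succ' (fun j => ((n.choose j : ℤ)) * ε (j + m)) n]
  have h1 : ∑ j ∈ range (n + 1), ((n.choose (j + 1) : ℤ)) * ε (j + 1 + m)
      = ∑ j ∈ range n, ((n.choose (j + 1) : ℤ)) * ε (j + 1 + m) := by
    rw [Finset.sum_range_succ]
    simp [Nat.choose_succ_self]
  have h2 : ∀ j ∈ range (n + 1),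
      (((n + 1).choose (j + 1) : ℤ)) * ε (j + 1 + m)
        = ((n.choose j : ℤ)) * ε (j + (m + 1)) + ((n.choose (j + 1) : ℤ)) * ε (j + 1 + m) := by
    intro j _
    have : (n + 1).choose (j + 1) = n.choose j + n.choose (j + 1) := Nat.choose_succ_succ n j
    rw [this]
    have : j + (m + 1) = j + 1 + m := by omega
    rw [this]
    push_cast
    ring
  rw [Finset.sum_congr rfl h2, Finset.sum_add_distrib]
  simp only [Nat.choose_zero_right, Nat.cast_one, one_mul, zero_add]
  rw [← h1]
  ring

/-- The m-th finite difference of `n ↦ ∑ C(n,j) ε j` is `n ↦ ∑ C(n,j) ε (j+m)`. -/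
private lemma diff_lemma (ε : ℕ → ℤ) (m : ℕ) : ∀ n : ℕ,
    (∑ ν ∈ range (m + 1), (-1 : ℤ) ^ ν * ((m.choose ν : ℤ)) *
      (∑ j ∈ range (n + m - ν + 1), (((n + m - ν).choose j : ℤ)) * ε j))
    = ∑ j ∈ range (n + 1), ((n.choose j : ℤ)) * ε (j + m) := by
  induction m with
  | zero => intro n; simp
  | succ m ih =>
    intro n
    set A : ℕ → ℤ := fun t => ∑ j ∈ range (t + 1), ((t.choose j : ℤ)) * ε j with hA
    have step :
        (∑ ν ∈ range (m + 1 + 1), (-1 : ℤ) ^ ν * (((m + 1).choose ν : ℤ)) * A (n + (m + 1) - ν))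
        = (∑ ν ∈ range (m + 1), (-1 : ℤ) ^ ν * ((m.choose ν : ℤ)) * A (n + 1 + m - ν))
          - (∑ ν ∈ range (m + 1), (-1 : ℤ) ^ ν * ((m.choose ν : ℤ)) * A (n + m - ν)) := by
      rw [Finset.sum_range_succ'
        (fun ν => (-1 : ℤ) ^ ν * (((m + 1).choose ν : ℤ)) * A (n + (m + 1) - ν)) (m + 1)]
      rw [Finset.sum_range_succ'
        (fun ν => (-1 : ℤ) ^ ν * ((m.choose ν : ℤ)) * A (n + 1 + m - ν)) m]
      have e1 : ∀ ν ∈ range (m + 1),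
          (-1 : ℤ) ^ (ν + 1) * (((m + 1).choose (ν + 1) : ℤ)) * A (n + (m + 1) - (ν + 1))
          = -((-1 : ℤ) ^ ν * ((m.choose ν : ℤ)) * A (n + m - ν))
            - (-1 : ℤ) ^ ν * ((m.choose (ν + 1) : ℤ)) * A (n + m - ν) := by
        intro ν _
        have hc : (m + 1).choose (ν + 1) = m.choose ν + m.choose (ν + 1) :=
          Nat.choose_succ_succ m ν
        have hi : n + (m + 1) - (ν + 1) = n + m - ν := by omega
        rw [hc, hi]
        push_cast
        ring
      rw [Finset.sum_congr rfl e1]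
      have e2 : ∀ ν ∈ range m,
          (-1 : ℤ) ^ (ν + 1) * ((m.choose (ν + 1) : ℤ)) * A (n + 1 + m - (ν + 1))
          = -((-1 : ℤ) ^ ν * ((m.choose (ν + 1) : ℤ)) * A (n + m - ν)) := by
        intro ν _
        have hi : n + 1 + m - (ν + 1) = n + m - ν := by omega
        rw [hi]
        push_cast
        ring
      rw [Finset.sum_congr rfl e2]
      have e3 : ∑ ν ∈ range (m + 1),
            (-((-1 : ℤ) ^ ν * ((m.choose ν : ℤ)) * A (n + m - ν))
              - (-1 : ℤ) ^ ν * ((m.choose (ν + 1) : ℤ)) * A (n + m - ν))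
          = -(∑ ν ∈ range (m + 1), (-1 : ℤ) ^ ν * ((m.choose ν : ℤ)) * A (n + m - ν))
            - ∑ ν ∈ range (m + 1), (-1 : ℤ) ^ ν * ((m.choose (ν + 1) : ℤ)) * A (n + m - ν) := by
        rw [Finset.sum_sub_distrib, Finset.sum_neg_distrib]
      rw [e3]
      have e4 : ∑ ν ∈ range (m + 1), (-1 : ℤ) ^ ν * ((m.choose (ν + 1) : ℤ)) * A (n + m - ν)
          = ∑ ν ∈ range m, (-1 : ℤ) ^ ν * ((m.choose (ν + 1) : ℤ)) * A (n + m - ν) := by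
        rw [Finset.sum_range_succ]
        simp [Nat.choose_succ_self]
      rw [e4, Finset.sum_neg_distrib]
      have hi0 : n + (m + 1) - 0 = n + 1 + m - 0 := by omega
      rw [hi0]
      simp only [Nat.choose_zero_right, Nat.cast_one, pow_zero, one_mul, mul_one]
      ring
    have hidx : ∀ ν, n + (m + 1) - ν = n + m + 1 - ν := by intro ν; omega
    calc (∑ ν ∈ range (m + 1 + 1), (-1 : ℤ) ^ ν * (((m + 1).choose ν : ℤ)) *
          (∑ j ∈ range (n + (m + 1) - ν + 1), (((n + (m + 1) - ν).choose j : ℤ)) * ε j))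
        = (∑ ν ∈ range (m + 1 + 1), (-1 : ℤ) ^ ν * (((m + 1).choose ν : ℤ)) * A (n + (m + 1) - ν)) := rfl
      _ = (∑ ν ∈ range (m + 1), (-1 : ℤ) ^ ν * ((m.choose ν : ℤ)) * A (n + 1 + m - ν))
          - (∑ ν ∈ range (m + 1), (-1 : ℤ) ^ ν * ((m.choose ν : ℤ)) * A (n + m - ν)) := step
      _ = (∑ j ∈ range (n + 1 + 1), (((n + 1).choose j : ℤ)) * ε (j + m))
          - ∑ j ∈ range (n + 1), ((n.choose j : ℤ)) * ε (j + m) := by rw [ih (n + 1), ih n]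
      _ = ∑ j ∈ range (n + 1), ((n.choose j : ℤ)) * ε (j + (m + 1)) := shift_lemma ε m n

/-- Parity flip: `C(j + 2^k, 2^k) + C(j, 2^k)` is odd. -/
private lemma choose_flip (k j : ℕ) :
    Odd ((j + 2 ^ k).choose (2 ^ k) + j.choose (2 ^ k)) := by
  have key : (((j + 2 ^ k).choose (2 ^ k) : ZMod 2)) = ((j.choose (2 ^ k) : ZMod 2)) + 1 := by
    rw [Nat.add_choose_eq]
    push_cast
    have hsub : ({(2 ^ k, 0), (0, 2 ^ k)} : Finset (ℕ × ℕ)) ⊆ Finset.HasAntidiagonal.antidiagonal (2 ^ k) := by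
      intro x hx
      simp only [Finset.mem_insert, Finset.mem_singleton] at hx
      rcases hx with h | h <;> subst h <;> simp [Finset.HasAntidiagonal.mem_antidiagonal]
    have hzero : ∀ x ∈ Finset.HasAntidiagonal.antidiagonal (2 ^ k),
        x ∉ ({(2 ^ k, 0), (0, 2 ^ k)} : Finset (ℕ × ℕ)) →
        ((j.choose x.1 : ZMod 2)) * (((2 ^ k).choose x.2 : ZMod 2)) = 0 := by
      intro x hx hxs
      rw [Finset.HasAntidiagonal.mem_antidiagonal] at hx
      simp only [Finset.mem_insert, Finset.mem_singleton] at hxs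
      push_neg at hxs
      have h2 : x.2 ≠ 0 ∧ x.2 ≠ 2 ^ k := by
        constructor
        · intro h
          apply hxs.1
          have : x.1 = 2 ^ k := by omega
          exact Prod.ext this h
        · intro h
          apply hxs.2
          have : x.1 = 0 := by omega
          exact Prod.ext this h
      have hdvd : 2 ∣ (2 ^ k).choose x.2 := Nat.Prime.dvd_choose_pow Nat.prime_two h2.1 h2.2
      have : (((2 ^ k).choose x.2 : ZMod 2)) = 0 :=
        (ZMod.natCast_eq_zero_iff _ _).2 hdvd
      rw [this, mul_zero]
    rw [← Finset.sum_subset hsub hzero]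
    have hne : ((2 ^ k, 0) : ℕ × ℕ) ≠ (0, 2 ^ k) := by
      intro h
      have h1 := congrArg Prod.fst h
      simp only at h1
      have h2 : (0 : ℕ) < 2 ^ k := Nat.pow_pos (by norm_num)
      omega
    rw [Finset.sum_pair hne]
    simp
  have hnd : ¬ (2 ∣ ((j + 2 ^ k).choose (2 ^ k) + j.choose (2 ^ k))) := by
    intro hdvd
    have h0 : (((j + 2 ^ k).choose (2 ^ k) + j.choose (2 ^ k) : ℕ) : ZMod 2) = 0 :=
      (ZMod.natCast_eq_zero_iff _ _).2 hdvd
    rw [Nat.cast_add, key] at h0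
    have h2 : ((2 : ZMod 2)) = 0 := by decide
    have h1 : (1 : ZMod 2) = 0 := by
      rw [show ((j.choose (2 ^ k) : ZMod 2)) + 1 + ((j.choose (2 ^ k) : ZMod 2))
          = 2 * ((j.choose (2 ^ k) : ZMod 2)) + 1 by ring, h2] at h0
      simpa using h0
    exact one_ne_zero h1
  rw [Nat.odd_iff]
  omega

private lemma eps_flip (k j : ℕ) :
    (-1 : ℤ) ^ ((j + 2 ^ k).choose (2 ^ k)) = -(-1 : ℤ) ^ (j.choose (2 ^ k)) := by
  have h := choose_flip k j
  have h1 : (-1 : ℤ) ^ ((j + 2 ^ k).choose (2 ^ k) + j.choose (2 ^ k)) = -1 :=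
    Odd.neg_one_pow h
  rw [pow_add] at h1
  have h2 : ((-1 : ℤ) ^ (j.choose (2 ^ k))) * ((-1 : ℤ) ^ (j.choose (2 ^ k))) = 1 := by
    rw [← pow_add]
    exact Even.neg_one_pow ⟨j.choose (2 ^ k), rfl⟩
  calc (-1 : ℤ) ^ ((j + 2 ^ k).choose (2 ^ k))
      = (-1 : ℤ) ^ ((j + 2 ^ k).choose (2 ^ k)) *
        (((-1 : ℤ) ^ (j.choose (2 ^ k))) * ((-1 : ℤ) ^ (j.choose (2 ^ k)))) := by rw [h2, mul_one]
    _ = ((-1 : ℤ) ^ ((j + 2 ^ k).choose (2 ^ k)) * (-1 : ℤ) ^ (j.choose (2 ^ k))) *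
        (-1 : ℤ) ^ (j.choose (2 ^ k)) := by ring
    _ = -(-1 : ℤ) ^ (j.choose (2 ^ k)) := by rw [h1]; ring

theorem stmt_16 (k : ℕ) (hk : 1 ≤ k)
    (a : ℕ → ℤ)
    (ha : ∀ n : ℕ, a n = ∑ j ∈ Finset.range (n + 1),
      (n.choose j : ℤ) * (-1 : ℤ) ^ (j.choose (2 ^ k))) :
    (∀ n : ℕ, ∑ ν ∈ Finset.range (2 ^ k + 1),
        (-1 : ℤ) ^ ν * ((2 ^ k).choose ν : ℤ) * a (n + 2 ^ k - ν) = -a n) ∧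
    (∀ n : ℕ, n ≤ 2 ^ k - 1 → a n = 2 ^ n) := by
  constructor
  · intro n
    simp only [ha]
    have h := diff_lemma (fun j => (-1 : ℤ) ^ (j.choose (2 ^ k))) (2 ^ k) n
    rw [h]
    rw [show -(∑ j ∈ Finset.range (n + 1), (n.choose j : ℤ) * (-1 : ℤ) ^ (j.choose (2 ^ k)))
        = ∑ j ∈ Finset.range (n + 1), (n.choose j : ℤ) * -((-1 : ℤ) ^ (j.choose (2 ^ k))) by
      rw [← Finset.sum_neg_distrib]; apply Finset.sum_congr rfl; intro j _; ring]
    apply Finset.sum_congr rfl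
    intro j _
    rw [eps_flip k j]
  · intro n hn
    have hlt : n < 2 ^ k := by
      have : 1 ≤ 2 ^ k := Nat.one_le_two_pow
      omega
    rw [ha n]
    have : ∀ j ∈ Finset.range (n + 1),
        (n.choose j : ℤ) * (-1 : ℤ) ^ (j.choose (2 ^ k)) = (n.choose j : ℤ) := by
      intro j hj
      rw [Finset.mem_range] at hj
      have : j.choose (2 ^ k) = 0 := Nat.choose_eq_zero_of_lt (by omega)
      rw [this, pow_zero, mul_one]
    rw [Finset.sum_congr rfl this]
    have := Nat.sum_range_choose n
    have hcast : (∑ j ∈ Finset.range (n + 1), (n.choose j : ℤ)) =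
        ((∑ j ∈ Finset.range (n + 1), n.choose j : ℕ) : ℤ) := by push_cast; rfl
    rw [hcast, this]
    push_cast
    ring
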